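/- Fix m ∈ M with support H = {j₁<⋯<j_s} and vacancy numbers p_j. The slides σ_k: J̄(m) → J̄(m) are bijections and pairwise commute: σ_k ∘ σ_l = σ_l ∘ σ_k for all k, l ≥ 1. -/

import Mathlib

/-- The vacancy number `p_j = L - 2 Σ_k min(j,k) m_k`. -/
def vacancy (L : ℕ) (m : ℕ →₀ ℕ) (j : ℕ) : ℤ :=
  (L : ℤ) - 2 * ∑ k ∈ m.support, (min j k : ℤ) * (m k : ℤ)

/-- `J ∈ J̄(m)`: on each block `j ∈ H = supp(m)`, the sequence `(J_i)_{i∈ℤ}` is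
weakly increasing and quasi-periodic: `J_{i+m_j} = J_i + p_j`. -/
def InJbar (L : ℕ) (m : ℕ →₀ ℕ) (J : ℕ → ℤ → ℤ) : Prop :=
  ∀ j ∈ m.support, (∀ i : ℤ, J j i ≤ J j (i + 1)) ∧
    ∀ i : ℤ, J j (i + (m j : ℤ)) = J j i + vacancy L m j

/-- The slide `σ_k`: `(σ_k J)^{(j)}_i = J^{(j)}_{i+δ_{j,k}} + 2 min(j,k)`. -/
def slide (k : ℕ) (J : ℕ → ℤ → ℤ) : ℕ → ℤ → ℤ :=
  fun j i => J j (i + (if j = k then 1 else 0)) + 2 * (min j k : ℤ)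

/-- Inverse of the slide. -/
def unslide (k : ℕ) (J : ℕ → ℤ → ℤ) : ℕ → ℤ → ℤ :=
  fun j i => J j (i - (if j = k then 1 else 0)) - 2 * (min j k : ℤ)

lemma slide_unslide (k : ℕ) (J : ℕ → ℤ → ℤ) : slide k (unslide k J) = J := by
  funext j i
  simp [slide, unslide]

lemma unslide_slide (k : ℕ) (J : ℕ → ℤ → ℤ) : unslide k (slide k J) = J := by
  funext j i
  simp [slide, unslide]

lemma slide_mem (L : ℕ) (m : ℕ →₀ ℕ) (k : ℕ) (J : ℕ → ℤ → ℤ)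
    (hJ : InJbar L m J) : InJbar L m (slide k J) := by
  intro j hj
  obtain ⟨h1, h2⟩ := hJ j hj
  constructor
  · intro i
    have := h1 (i + (if j = k then 1 else 0))
    simp only [slide]
    have e : i + 1 + (if j = k then 1 else 0) = i + (if j = k then 1 else 0) + 1 := by ring
    rw [e]
    linarith
  · intro i
    simp only [slide]
    have e : i + (m j : ℤ) + (if j = k then 1 else 0)
        = i + (if j = k then 1 else 0) + (m j : ℤ) := by ring
    rw [e, h2]
    ring

lemma unslide_mem (L : ℕ) (m : ℕ →₀ ℕ) (k : ℕ) (J : ℕ → ℤ → ℤ)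
    (hJ : InJbar L m J) : InJbar L m (unslide k J) := by
  intro j hj
  obtain ⟨h1, h2⟩ := hJ j hj
  constructor
  · intro i
    have := h1 (i - (if j = k then 1 else 0))
    simp only [unslide]
    have e : i + 1 - (if j = k then 1 else 0) = i - (if j = k then 1 else 0) + 1 := by ring
    rw [e]
    linarith
  · intro i
    simp only [unslide]
    have e : i + (m j : ℤ) - (if j = k then 1 else 0)
        = i - (if j = k then 1 else 0) + (m j : ℤ) := by ring
    rw [e, h2]
    ring

/-- The slides `σ_k : J̄(m) → J̄(m)` are bijections and pairwise commute. -/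
theorem stmt7 (L : ℕ) (hL : 0 < L) (m : ℕ →₀ ℕ) (h0 : m 0 = 0)
    (hm : 2 * ∑ j ∈ m.support, j * m j ≤ L) :
    (∀ k, 1 ≤ k → Set.BijOn (slide k) {J | InJbar L m J} {J | InJbar L m J}) ∧
    (∀ k l, 1 ≤ k → 1 ≤ l → slide k ∘ slide l = slide l ∘ slide k) := by
  constructor
  · intro k _
    refine ⟨fun J hJ => slide_mem L m k J hJ, ?_, ?_⟩
    · intro J _ J' _ h
      have := congrArg (unslide k) h
      rwa [unslide_slide, unslide_slide] at this
    · intro J hJ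
      exact ⟨unslide k J, unslide_mem L m k J hJ, slide_unslide k J⟩
  · intro k l _ _
    funext J j i
    simp only [Function.comp, slide]
    have e : i + (if j = l then 1 else 0) + (if j = k then 1 else 0)
        = i + (if j = k then 1 else 0) + (if j = l then 1 else 0) := by ring
    rw [e]
    ring
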